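/- Let 𝕃 be the abelian group given by generators x₁, x₂, x₃, x₄ and relations 2x₁ = 2x₂ = 2x₃ = 2x₄, let c := 2x₁, ω := 2c − (x₁+x₂+x₃+x₄), and let P be the submonoid of 𝕃 generated by x₁, x₂, x₃, x₄. Then every element x ∈ 𝕃 satisfies exactly one of the two alternatives: x ∈ P (i.e., x ≥ 0), or (ω + c) − x ∈ P (i.e., x ≤ ω + c). -/

import Mathlib

/-- The subgroup of relations `2e₁ = 2e₂ = 2e₃ = 2e₄` in `ℤ⁴`. -/
def Lrel : AddSubgroup (Fin 4 → ℤ) :=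
  AddSubgroup.closure
    { (2 : ℤ) • Pi.single (0 : Fin 4) (1 : ℤ) - (2 : ℤ) • Pi.single 1 1,
      (2 : ℤ) • Pi.single (0 : Fin 4) (1 : ℤ) - (2 : ℤ) • Pi.single 2 1,
      (2 : ℤ) • Pi.single (0 : Fin 4) (1 : ℤ) - (2 : ℤ) • Pi.single 3 1 }

/-- The group `𝕃` of type `(2,2,2,2)`. -/
abbrev Lgrp : Type := (Fin 4 → ℤ) ⧸ Lrel

/-- The generators `x₁, x₂, x₃, x₄` of `𝕃`. -/
def xL (i : Fin 4) : Lgrp := QuotientAddGroup.mk (Pi.single i 1)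

/-- The canonical element `c = 2x₁`. -/
def cL : Lgrp := (2 : ℤ) • xL 0

/-- The dualizing element `ω = 2c − (x₁+x₂+x₃+x₄)`. -/
def ωL : Lgrp := (2 : ℤ) • cL - (xL 0 + xL 1 + xL 2 + xL 3)

/-- The cone `P` of positive elements: the submonoid generated by `x₁, x₂, x₃, x₄`. -/
def Lpos : AddSubmonoid Lgrp := AddSubmonoid.closure {xL 0, xL 1, xL 2, xL 3}

/-- Evaluation at a coordinate. -/
def ev (i : Fin 4) : (Fin 4 → ℤ) →+ ℤ := Pi.evalAddMonoidHom (fun _ : Fin 4 => ℤ) i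

/-- Sum-of-coordinates hom on ℤ⁴. -/
def Nhom : (Fin 4 → ℤ) →+ ℤ := ev 0 + ev 1 + ev 2 + ev 3

/-- Coordinate mod 2. -/
def εhom (j : Fin 4) : (Fin 4 → ℤ) →+ ZMod 2 :=
  (Int.castAddHom (ZMod 2)).comp (ev j)

lemma Nhom_ker : Lrel ≤ Nhom.ker := by
  rw [Lrel, AddSubgroup.closure_le]
  rintro v (rfl | rfl | rfl) <;>
    simp [Nhom, ev, AddMonoidHom.mem_ker, Pi.single_apply]

lemma εhom_ker (j : Fin 4) : Lrel ≤ (εhom j).ker := by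
  rw [Lrel, AddSubgroup.closure_le]
  rintro v (rfl | rfl | rfl) <;>
    simp only [AddMonoidHom.mem_ker, εhom, ev, AddMonoidHom.coe_comp, Function.comp_apply,
      Pi.evalAddMonoidHom_apply, Pi.sub_apply, Pi.smul_apply, Pi.single_apply, smul_eq_mul] <;>
    fin_cases j <;> simp <;> decide

def NL : Lgrp →+ ℤ := QuotientAddGroup.lift Lrel Nhom Nhom_ker

def εL (j : Fin 4) : Lgrp →+ ZMod 2 := QuotientAddGroup.lift Lrel (εhom j) (εhom_ker j)

@[simp] lemma NL_mk (v : Fin 4 → ℤ) :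
    NL (QuotientAddGroup.mk v) = v 0 + v 1 + v 2 + v 3 := rfl

@[simp] lemma εL_mk (j : Fin 4) (v : Fin 4 → ℤ) :
    εL j (QuotientAddGroup.mk v) = (v j : ZMod 2) := rfl

@[simp] lemma NL_xL (i : Fin 4) : NL (xL i) = 1 := by
  fin_cases i <;> rfl

@[simp] lemma εL_xL (j i : Fin 4) : εL j (xL i) = if j = i then 1 else 0 := by
  rw [xL, εL_mk, Pi.single_apply]
  split <;> simp

lemma rel2' (i : Fin 4)
    (h : ((2 : ℤ) • Pi.single (0 : Fin 4) (1 : ℤ) - (2 : ℤ) • Pi.single i 1) ∈ Lrel) :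
    (2 : ℤ) • xL 0 = (2 : ℤ) • xL i := by
  rw [xL, xL, ← QuotientAddGroup.mk_zsmul, ← QuotientAddGroup.mk_zsmul, QuotientAddGroup.eq]
  rw [neg_add_eq_sub, ← neg_sub]
  exact AddSubgroup.neg_mem _ h

lemma rel2 (i : Fin 4) : (2 : ℤ) • xL 0 = (2 : ℤ) • xL i := by
  fin_cases i
  · rfl
  · exact rel2' 1 (AddSubgroup.subset_closure (by simp))
  · exact rel2' 2 (AddSubgroup.subset_closure (by simp))
  · exact rel2' 3 (AddSubgroup.subset_closure (by simp))

lemma even_smul_eq (i : Fin 4) (k : ℤ) : (2 * k) • xL i = (2 * k) • xL 0 := by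
  rw [mul_comm, mul_smul, mul_smul, ← rel2 i]

lemma split_smul (i : Fin 4) (m : ℤ) :
    m • xL i = (m - m % 2) • xL 0 + (m % 2) • xL i := by
  have h2 : m - m % 2 = 2 * (m / 2) := by omega
  have h := even_smul_eq i (m / 2)
  rw [h2, ← h, ← add_zsmul]
  congr 1
  omega

/-- Normal form. -/
lemma repr_eq (x : Lgrp) :
    x = (NL x - ((εL 1 x).val + (εL 2 x).val + (εL 3 x).val)) • xL 0 +
        ((εL 1 x).val : ℤ) • xL 1 + ((εL 2 x).val : ℤ) • xL 2 + ((εL 3 x).val : ℤ) • xL 3 := by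
  induction x using QuotientAddGroup.induction_on with
  | H v =>
    have hv : v = v 0 • Pi.single (0 : Fin 4) 1 + v 1 • Pi.single 1 1 + v 2 • Pi.single 2 1 +
        v 3 • Pi.single 3 1 := by
      funext j
      fin_cases j <;> simp [Pi.single_apply]
    have hmk : (QuotientAddGroup.mk v : Lgrp)
        = v 0 • xL 0 + v 1 • xL 1 + v 2 • xL 2 + v 3 • xL 3 := by
      conv_lhs => rw [hv]
      rfl
    have hval : ∀ j : Fin 4, ((εL j (QuotientAddGroup.mk v)).val : ℤ) = v j % 2 := by
      intro j
      rw [εL_mk, ZMod.val_intCast]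
      norm_num
    rw [NL_mk, hval 1, hval 2, hval 3, hmk]
    rw [split_smul 1 (v 1), split_smul 2 (v 2), split_smul 3 (v 3)]
    simp only [sub_zsmul, add_zsmul]
    abel

lemma val_le_one (e : ZMod 2) : e.val ≤ 1 := by revert e; decide

lemma val_add_le (a b : ZMod 2) : (a + b).val ≤ a.val + b.val := by revert a b; decide

lemma val_one_sub (e : ZMod 2) : (1 - e).val = 1 - e.val := by revert e; decide

lemma zsmul_nonneg_mem {S : AddSubmonoid Lgrp} {g : Lgrp} (hg : g ∈ S) {k : ℤ} (hk : 0 ≤ k) :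
    k • g ∈ S := by
  obtain ⟨m, rfl⟩ := Int.eq_ofNat_of_zero_le hk
  rw [natCast_zsmul]
  exact AddSubmonoid.nsmul_mem _ hg m

lemma mem_Lpos_iff (x : Lgrp) :
    x ∈ Lpos ↔ ((εL 1 x).val + (εL 2 x).val + (εL 3 x).val : ℤ) ≤ NL x := by
  constructor
  · intro hx
    induction hx using AddSubmonoid.closure_induction with
    | mem g hg =>
      rcases hg with rfl | rfl | rfl | rfl <;> simp [εL_xL] <;> decide
    | zero => simp
    | add a b _ _ ha hb =>
      have h1 := val_add_le (εL 1 a) (εL 1 b)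
      have h2 := val_add_le (εL 2 a) (εL 2 b)
      have h3 := val_add_le (εL 3 a) (εL 3 b)
      simp only [map_add] at *
      omega
  · intro h
    rw [repr_eq x]
    have h0 : xL 0 ∈ Lpos := AddSubmonoid.subset_closure (by simp)
    have h1 : xL 1 ∈ Lpos := AddSubmonoid.subset_closure (by simp)
    have h2 : xL 2 ∈ Lpos := AddSubmonoid.subset_closure (by simp)
    have h3 : xL 3 ∈ Lpos := AddSubmonoid.subset_closure (by simp)
    refine AddSubmonoid.add_mem _ (AddSubmonoid.add_mem _ (AddSubmonoid.add_mem _ ?_ ?_) ?_) ?_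
    · exact zsmul_nonneg_mem h0 (by omega)
    · exact zsmul_nonneg_mem h1 (by positivity)
    · exact zsmul_nonneg_mem h2 (by positivity)
    · exact zsmul_nonneg_mem h3 (by positivity)

lemma NL_ωc : NL (ωL + cL) = 2 := by
  simp [ωL, cL, map_add, map_sub, map_zsmul]

lemma εL_ωc (j : Fin 4) (hj : j ≠ 0) : εL j (ωL + cL) = 1 := by
  simp only [ωL, cL, map_add, map_sub, map_zsmul, εL_xL, if_neg hj]
  fin_cases j <;> simp_all <;> decide

/-- Every `x ∈ 𝕃` satisfies exactly one of the alternatives `x ≥ 0` (i.e. `x ∈ P`) or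
`x ≤ ω + c` (i.e. `(ω + c) − x ∈ P`). -/
theorem pos_or_le_omega_add_c (x : Lgrp) :
    Xor' (x ∈ Lpos) ((ωL + cL) - x ∈ Lpos) := by
  have hA := mem_Lpos_iff x
  have hB := mem_Lpos_iff ((ωL + cL) - x)
  have hN : NL ((ωL + cL) - x) = 2 - NL x := by rw [map_sub, NL_ωc]
  have hε : ∀ j : Fin 4, j ≠ 0 → εL j ((ωL + cL) - x) = 1 - εL j x := by
    intro j hj
    rw [map_sub, εL_ωc j hj]
  rw [hN, hε 1 (by decide), hε 2 (by decide), hε 3 (by decide)] at hB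
  rw [val_one_sub, val_one_sub, val_one_sub] at hB
  have b1 := val_le_one (εL 1 x)
  have b2 := val_le_one (εL 2 x)
  have b3 := val_le_one (εL 3 x)
  rw [Xor', xor_def, hA, hB]
  omega
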